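/- arXiv:2109.06943 — 3 statements merged into one kernel-verified Lean document; each statement's English description precedes it below -/
import Mathlib

section
/- Harnack's inequality for the disc: if v is a positive harmonic function on the open unit disc in ℂ, then for all 0 ≤ r < 1 and t ∈ ℝ, ((1−r)/(1+r)) v(0) ≤ v(r e^{it}) ≤ ((1+r)/(1−r)) v(0). -/
open Complex Metric

/-- The Laplacian `Δv = v_xx + v_yy` of a function `v : ℂ → ℝ`, computed via iterated
directional derivatives in the directions `1` and `I`. -/
noncomputable def lap (v : ℂ → ℝ) (z : ℂ) : ℝ :=
  fderiv ℝ (fun w => fderiv ℝ v w 1) z 1 +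
  fderiv ℝ (fun w => fderiv ℝ v w Complex.I) z Complex.I

open intervalIntegral

namespace Harnack


lemma clm_eq_of_one_I {F : Type*} [NormedAddCommGroup F] [NormedSpace ℝ F]
    (D E : ℂ →L[ℝ] F) (h1 : D 1 = E 1) (hI : D Complex.I = E Complex.I) : D = E := by
  ext z
  have hz : (z : ℂ) = z.re • (1:ℂ) + z.im • Complex.I := by
    simp [Complex.real_smul, Complex.re_add_im]
  calc D z = D (z.re • (1:ℂ) + z.im • Complex.I) := by rw [← hz]
  _ = z.re • D 1 + z.im • D Complex.I := by rw [map_add, map_smul, map_smul]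
  _ = z.re • E 1 + z.im • E Complex.I := by rw [h1, hI]
  _ = E z := by rw [← map_smul, ← map_smul, ← map_add, ← hz]

/-- The function `g = v_x - i v_y`. -/
noncomputable def gf (v : ℂ → ℝ) (w : ℂ) : ℂ :=
  ((fderiv ℝ v w 1 : ℝ) : ℂ) - ((fderiv ℝ v w Complex.I : ℝ) : ℂ) * Complex.I

lemma gf_holo {v : ℂ → ℝ} (hC2 : ContDiffOn ℝ 2 v (ball (0:ℂ) 1))
    (hharm : ∀ z ∈ ball (0:ℂ) 1, lap v z = 0) :
    DifferentiableOn ℂ (gf v) (ball (0:ℂ) 1) := by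
  intro z hz
  have hca : ContDiffAt ℝ 2 v z := hC2.contDiffAt (isOpen_ball.mem_nhds hz)
  have hd1 : ContDiffAt ℝ 1 (fderiv ℝ v) z := hca.fderiv_right (by norm_num)
  have hdd : DifferentiableAt ℝ (fderiv ℝ v) z := hd1.differentiableAt one_ne_zero
  set B := fderiv ℝ (fderiv ℝ v) z with hB
  have h1 : HasFDerivAt (fun w => fderiv ℝ v w 1)
      ((ContinuousLinearMap.apply ℝ ℝ (1:ℂ)).comp B) z :=
    ((ContinuousLinearMap.apply ℝ ℝ (1:ℂ)).hasFDerivAt).comp z hdd.hasFDerivAt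
  have h2 : HasFDerivAt (fun w => fderiv ℝ v w Complex.I)
      ((ContinuousLinearMap.apply ℝ ℝ (Complex.I)).comp B) z :=
    ((ContinuousLinearMap.apply ℝ ℝ (Complex.I)).hasFDerivAt).comp z hdd.hasFDerivAt
  -- real derivative of gf
  have h1' : HasFDerivAt (fun w => ((fderiv ℝ v w 1 : ℝ) : ℂ))
      (Complex.ofRealCLM.comp ((ContinuousLinearMap.apply ℝ ℝ (1:ℂ)).comp B)) z :=
    Complex.ofRealCLM.hasFDerivAt.comp z h1
  have h2' : HasFDerivAt (fun w => ((fderiv ℝ v w Complex.I : ℝ) : ℂ))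
      (Complex.ofRealCLM.comp ((ContinuousLinearMap.apply ℝ ℝ (Complex.I)).comp B)) z :=
    Complex.ofRealCLM.hasFDerivAt.comp z h2
  have hD : HasFDerivAt (gf v)
      (Complex.ofRealCLM.comp ((ContinuousLinearMap.apply ℝ ℝ (1:ℂ)).comp B) -
        Complex.I • (Complex.ofRealCLM.comp ((ContinuousLinearMap.apply ℝ ℝ (Complex.I)).comp B)))
      z := h1'.sub (h2'.mul_const Complex.I)
  -- symmetry and harmonicity
  have hsymm : B Complex.I 1 = B 1 Complex.I := (hca.isSymmSndFDerivAt (by norm_num)) _ _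
  have hlap : B 1 1 + B Complex.I Complex.I = 0 := by
    have := hharm z hz
    unfold lap at this
    rwa [h1.fderiv, h2.fderiv] at this
  set c : ℂ := ((B 1 1 : ℝ) : ℂ) - ((B 1 Complex.I : ℝ) : ℂ) * Complex.I with hc
  have hrs : (c • (ContinuousLinearMap.id ℂ ℂ)).restrictScalars ℝ =
      (Complex.ofRealCLM.comp ((ContinuousLinearMap.apply ℝ ℝ (1:ℂ)).comp B) -
        Complex.I • (Complex.ofRealCLM.comp ((ContinuousLinearMap.apply ℝ ℝ (Complex.I)).comp B))) := by
    have hII : B Complex.I Complex.I = -(B 1 1) := by linarith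
    apply clm_eq_of_one_I
    · show c * 1 = ((B 1 1 : ℝ) : ℂ) - Complex.I • ((B 1 Complex.I : ℝ) : ℂ)
      rw [hc]; rw [smul_eq_mul]; ring
    · show c * Complex.I = ((B Complex.I 1 : ℝ) : ℂ) - Complex.I • ((B Complex.I Complex.I : ℝ) : ℂ)
      rw [hc, hsymm, hII, smul_eq_mul]
      push_cast
      ring_nf
      rw [Complex.I_sq]
      ring
  exact (hasFDerivAt_of_restrictScalars ℝ hD hrs).differentiableAt.differentiableWithinAt



noncomputable def prim (g : ℂ → ℂ) (z : ℂ) : ℂ := ∫ t in (0:ℝ)..1, z * g ((t:ℂ) * z)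

lemma prim_hasDerivAt {g : ℂ → ℂ} (hg : DifferentiableOn ℂ g (ball (0:ℂ) 1))
    {z₀ : ℂ} (hz₀ : z₀ ∈ ball (0:ℂ) 1) : HasDerivAt (prim g) (g z₀) z₀ := by
  have hz₀' : ‖z₀‖ < 1 := by simpa [mem_ball, dist_eq_norm] using hz₀
  set ρ : ℝ := (1 + ‖z₀‖) / 2 with hρ
  have hρ1 : ρ < 1 := by rw [hρ]; linarith
  have hρ0 : 0 ≤ ρ := by rw [hρ]; positivity
  set ε : ℝ := (1 - ‖z₀‖) / 2 with hε
  have hε0 : 0 < ε := by rw [hε]; linarith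
  have hsub : closedBall (0:ℂ) ρ ⊆ ball (0:ℂ) 1 := closedBall_subset_ball hρ1
  -- membership facts
  have hmem : ∀ x : ℂ, x ∈ ball z₀ ε → ∀ t : ℝ, t ∈ Set.uIcc (0:ℝ) 1 →
      (t:ℂ) * x ∈ closedBall (0:ℂ) ρ := by
    intro x hx t ht
    have hxn : ‖x‖ < ρ := by
      have := mem_ball_iff_norm.mp hx
      calc ‖x‖ = ‖z₀ + (x - z₀)‖ := by ring_nf
      _ ≤ ‖z₀‖ + ‖x - z₀‖ := norm_add_le _ _
      _ < ‖z₀‖ + ε := by linarith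
      _ = ρ := by rw [hε, hρ]; ring
    rw [Set.uIcc_of_le (by norm_num : (0:ℝ) ≤ 1)] at ht
    have ht0 : 0 ≤ t := ht.1
    have ht1 : t ≤ 1 := ht.2
    rw [mem_closedBall, dist_zero_right, norm_mul, Complex.norm_real, Real.norm_eq_abs,
      _root_.abs_of_nonneg ht0]
    nlinarith [norm_nonneg x]
  -- continuity of g and deriv g on the closed ball
  have hganal := hg.analyticOnNhd isOpen_ball
  have hgc : ContinuousOn g (closedBall (0:ℂ) ρ) := (hg.continuousOn).mono hsub
  have hg'c : ContinuousOn (deriv g) (closedBall (0:ℂ) ρ) :=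
    (hganal.deriv.continuousOn).mono hsub
  obtain ⟨C, hC⟩ := (isCompact_closedBall (0:ℂ) ρ).exists_bound_of_continuousOn hgc
  obtain ⟨C', hC'⟩ := (isCompact_closedBall (0:ℂ) ρ).exists_bound_of_continuousOn hg'c
  have hC0 : 0 ≤ C := le_trans (norm_nonneg _) (hC 0 (by simp [hρ0]))
  have hC'0 : 0 ≤ C' := le_trans (norm_nonneg _) (hC' 0 (by simp [hρ0]))
  -- the derivative integrand
  set F' : ℂ → ℝ → ℂ := fun x t => g ((t:ℂ) * x) + x * (deriv g ((t:ℂ) * x) * (t:ℂ)) with hF'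
  -- continuity in t for fixed x in the ball
  have hcont : ∀ x : ℂ, x ∈ ball z₀ ε →
      ContinuousOn (fun t : ℝ => x * g ((t:ℂ) * x)) (Set.uIcc (0:ℝ) 1) := by
    intro x hx
    apply ContinuousOn.mul continuousOn_const
    apply hgc.comp (by fun_prop) (fun t ht => hmem x hx t ht)
  have hz₀mem : z₀ ∈ ball z₀ ε := mem_ball_self hε0
  have hcont' : ContinuousOn (F' z₀) (Set.uIcc (0:ℝ) 1) := by
    apply ContinuousOn.add
    · exact hgc.comp (by fun_prop) (fun t ht => hmem z₀ hz₀mem t ht)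
    · apply continuousOn_const.mul
      apply ContinuousOn.mul _ (by fun_prop)
      exact hg'c.comp (by fun_prop) (fun t ht => hmem z₀ hz₀mem t ht)
  have key := hasDerivAt_integral_of_dominated_loc_of_deriv_le (F := fun x t => x * g ((t:ℂ)*x))
    (F' := F') (x₀ := z₀) (s := ball z₀ ε) (a := (0:ℝ)) (b := 1) (μ := MeasureTheory.volume)
    (bound := fun _ => C + C') (ball_mem_nhds z₀ hε0)
    ?_ ?_ ?_ ?_ ?_ ?_
  · rcases key with ⟨hint, hder⟩
    have hiq : (∫ t in (0:ℝ)..1, F' z₀ t) = g z₀ := by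
      have hderφ : ∀ t ∈ Set.uIcc (0:ℝ) 1,
          HasDerivAt (fun s : ℝ => (s:ℂ) * g ((s:ℂ) * z₀)) (F' z₀ t) t := by
        intro t ht
        have htmem : (t:ℂ) * z₀ ∈ ball (0:ℂ) 1 := hsub (hmem z₀ hz₀mem t ht)
        have hgd : HasDerivAt g (deriv g ((t:ℂ) * z₀)) ((t:ℂ) * z₀) :=
          (hg.differentiableAt (isOpen_ball.mem_nhds htmem)).hasDerivAt
        have hin : HasDerivAt (fun s : ℝ => (s:ℂ) * z₀) z₀ t := by
          simpa using (Complex.ofRealCLM.hasDerivAt (x := t)).mul_const z₀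
        have hcomp : HasDerivAt (fun s : ℝ => g ((s:ℂ) * z₀))
            (z₀ • deriv g ((t:ℂ) * z₀)) t := hgd.scomp t hin
        have hre : HasDerivAt (fun s : ℝ => (s:ℂ)) 1 t := by
          exact Complex.ofRealCLM.hasDerivAt (x := t)
        have := hre.mul hcomp
        refine this.congr_deriv ?_
        rw [hF']
        simp only [smul_eq_mul]
        ring
      rw [integral_eq_sub_of_hasDerivAt hderφ hint]
      simp
    rw [hiq] at hder
    exact hder
  · filter_upwards [ball_mem_nhds z₀ hε0] with x hx
    exact ((hcont x hx).mono (Set.uIoc_subset_uIcc (α := ℝ))).aestronglyMeasurable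
      measurableSet_uIoc
  · exact (hcont z₀ hz₀mem).intervalIntegrable
  · exact (hcont'.mono (Set.uIoc_subset_uIcc (α := ℝ))).aestronglyMeasurable measurableSet_uIoc
  · apply Filter.Eventually.of_forall
    intro t ht x hx
    have htm : t ∈ Set.uIcc (0:ℝ) 1 := Set.uIoc_subset_uIcc ht
    have htx : (t:ℂ) * x ∈ closedBall (0:ℂ) ρ := hmem x hx t htm
    rw [Set.uIcc_of_le (by norm_num : (0:ℝ) ≤ 1)] at htm
    have hxn : ‖x‖ ≤ 1 := by
      have h := mem_closedBall.mp htx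
      have hxρ : ‖x‖ < ρ := by
        have := mem_ball_iff_norm.mp hx
        calc ‖x‖ = ‖z₀ + (x - z₀)‖ := by ring_nf
        _ ≤ ‖z₀‖ + ‖x - z₀‖ := norm_add_le _ _
        _ < ‖z₀‖ + ε := by linarith
        _ = ρ := by rw [hε, hρ]; ring
      linarith
    have h1 : ‖g ((t:ℂ) * x)‖ ≤ C := hC _ htx
    have h2 : ‖deriv g ((t:ℂ) * x)‖ ≤ C' := hC' _ htx
    calc ‖F' x t‖ ≤ ‖g ((t:ℂ)*x)‖ + ‖x * (deriv g ((t:ℂ)*x) * (t:ℂ))‖ := norm_add_le _ _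
    _ = ‖g ((t:ℂ)*x)‖ + ‖x‖ * (‖deriv g ((t:ℂ)*x)‖ * |t|) := by
        simp [norm_mul, Complex.norm_real, Real.norm_eq_abs]
    _ ≤ C + C' := by
        have habs : |t| ≤ 1 := abs_le.mpr ⟨by linarith [htm.1], htm.2⟩
        have hb : ‖x‖ * (‖deriv g ((t:ℂ)*x)‖ * |t|) ≤ 1 * (C' * 1) := by
          gcongr
        linarith
  · exact intervalIntegrable_const
  · apply Filter.Eventually.of_forall
    intro t ht x hx
    have htm : t ∈ Set.uIcc (0:ℝ) 1 := Set.uIoc_subset_uIcc ht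
    have htx : (t:ℂ) * x ∈ ball (0:ℂ) 1 := hsub (hmem x hx t htm)
    have hgd : HasDerivAt g (deriv g ((t:ℂ) * x)) ((t:ℂ) * x) :=
      (hg.differentiableAt (isOpen_ball.mem_nhds htx)).hasDerivAt
    have hin : HasDerivAt (fun y : ℂ => (t:ℂ) * y) (t:ℂ) x := by
      simpa using (hasDerivAt_id x).const_mul (t:ℂ)
    have hcomp : HasDerivAt (fun y : ℂ => g ((t:ℂ) * y)) (deriv g ((t:ℂ)*x) * (t:ℂ)) x := by
      exact HasDerivAt.comp x hgd hin
    have := (hasDerivAt_id x).mul hcomp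
    exact this.congr_deriv (by simp only [id_eq, hF']; ring)

end Harnack

open Harnack

set_option maxHeartbeats 1000000 in
/-- Harnack's inequality on the unit disc: if `v` is a positive harmonic function on the
open unit disc, then `((1-r)/(1+r)) v(0) ≤ v(r e^{it}) ≤ ((1+r)/(1-r)) v(0)` for all
`0 ≤ r < 1` and `t ∈ ℝ`. -/
theorem stmt1 (v : ℂ → ℝ)
    (hC2 : ContDiffOn ℝ 2 v (ball (0:ℂ) 1))
    (hharm : ∀ z ∈ ball (0:ℂ) 1, lap v z = 0)
    (hpos : ∀ z ∈ ball (0:ℂ) 1, 0 < v z)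
    (r t : ℝ) (hr0 : 0 ≤ r) (hr1 : r < 1) :
    ((1 - r) / (1 + r)) * v 0 ≤ v ((r : ℂ) * Complex.exp (t * Complex.I)) ∧
    v ((r : ℂ) * Complex.exp (t * Complex.I)) ≤ ((1 + r) / (1 - r)) * v 0 := by
  have h0mem : (0:ℂ) ∈ ball (0:ℂ) 1 := by simp
  have hg := gf_holo hC2 hharm
  set F : ℂ → ℂ := prim (gf v) with hF
  have hFd : ∀ z ∈ ball (0:ℂ) 1, HasDerivAt F (gf v z) z := fun z hz => prim_hasDerivAt hg hz
  have hFdiff : DifferentiableOn ℂ F (ball (0:ℂ) 1) :=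
    fun z hz => ((hFd z hz).differentiableAt).differentiableWithinAt
  have hF0 : F 0 = 0 := by
    rw [hF]; unfold prim; simp
  -- `v z = Re (F z) + v 0` on the ball
  have hconst : ∀ z ∈ ball (0:ℂ) 1, v z - (F z).re = v 0 := by
    intro z hz
    have := (convex_ball (0:ℂ) 1).is_const_of_fderivWithin_eq_zero
      (f := fun w => v w - (F w).re) (𝕜 := ℝ) ?_ ?_ hz h0mem
    · simpa [hF0] using this
    · intro w hw
      have hvd : DifferentiableWithinAt ℝ v (ball (0:ℂ) 1) w :=
        (hC2.differentiableOn two_ne_zero) w hw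
      exact hvd.sub ((Complex.reCLM.differentiable.differentiableAt).comp_differentiableWithinAt w
        ((hFdiff w hw).restrictScalars ℝ))
    · intro w hw
      rw [fderivWithin_of_isOpen isOpen_ball hw]
      have hvd : DifferentiableAt ℝ v w :=
        (hC2.contDiffAt (isOpen_ball.mem_nhds hw)).differentiableAt two_ne_zero
      have hFr : HasFDerivAt (fun x => (F x).re)
          (Complex.reCLM.comp (((1 : ℂ →L[ℂ] ℂ).smulRight (gf v w)).restrictScalars ℝ)) w :=
        (Complex.reCLM.hasFDerivAt).comp w ((hFd w hw).hasFDerivAt.restrictScalars ℝ)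
      have hsub : HasFDerivAt (fun x => v x - (F x).re)
          (fderiv ℝ v w - Complex.reCLM.comp
            (((1 : ℂ →L[ℂ] ℂ).smulRight (gf v w)).restrictScalars ℝ)) w :=
        hvd.hasFDerivAt.sub hFr
      rw [hsub.fderiv]
      have : fderiv ℝ v w = Complex.reCLM.comp
          (((1 : ℂ →L[ℂ] ℂ).smulRight (gf v w)).restrictScalars ℝ) := by
        apply clm_eq_of_one_I
        · show fderiv ℝ v w 1 = ((1:ℂ) • (gf v w)).re
          rw [gf]; simp
        · show fderiv ℝ v w Complex.I = (Complex.I • (gf v w)).re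
          rw [gf]; simp [Complex.mul_re]
      rw [← this]; simp
  set a : ℝ := v 0 with ha_def
  have ha : 0 < a := hpos 0 h0mem
  set f : ℂ → ℂ := fun z => F z + (a:ℂ) with hf
  have hfre : ∀ z ∈ ball (0:ℂ) 1, (f z).re = v z := by
    intro z hz
    have := hconst z hz
    rw [hf]; simp only [Complex.add_re, Complex.ofReal_re]
    linarith
  have hfdiff : DifferentiableOn ℂ f (ball (0:ℂ) 1) := hFdiff.add_const _
  have hden : ∀ z ∈ ball (0:ℂ) 1, f z + (a:ℂ) ≠ 0 := by
    intro z hz h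
    have : (f z + (a:ℂ)).re = 0 := by rw [h]; simp
    rw [Complex.add_re, Complex.ofReal_re, hfre z hz] at this
    have := hpos z hz
    linarith
  set φ : ℂ → ℂ := fun z => (f z - (a:ℂ)) / (f z + (a:ℂ)) with hφ
  have hφdiff : DifferentiableOn ℂ φ (ball (0:ℂ) 1) :=
    ((hfdiff.sub_const _).div (hfdiff.add_const _) hden)
  have hφ0 : φ 0 = 0 := by
    rw [hφ]; simp only [hf, hF0, zero_add, sub_self, zero_div]
  have habs : ∀ z ∈ ball (0:ℂ) 1, ‖φ z‖ < 1 := by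
    intro z hz
    have hvz := hpos z hz
    have hnum : ‖f z - (a:ℂ)‖ < ‖f z + (a:ℂ)‖ := by
      have h1 : Complex.normSq (f z - (a:ℂ)) < Complex.normSq (f z + (a:ℂ)) := by
        simp only [Complex.normSq_apply, Complex.sub_re, Complex.sub_im, Complex.add_re,
          Complex.add_im, Complex.ofReal_re, Complex.ofReal_im, hfre z hz]
        nlinarith
      have h2 := Complex.sq_norm (f z - (a:ℂ))
      have h3 := Complex.sq_norm (f z + (a:ℂ))
      nlinarith [norm_nonneg (f z - (a:ℂ)), norm_nonneg (f z + (a:ℂ))]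
    rw [hφ]
    simp only [norm_div]
    rw [div_lt_one (lt_of_le_of_lt (norm_nonneg _) hnum)]
    exact hnum
  have hmaps : Set.MapsTo φ (ball (0:ℂ) 1) (ball (0:ℂ) 1) := by
    intro z hz
    rw [mem_ball_zero_iff]
    exact habs z hz
  -- the point
  set z : ℂ := (r : ℂ) * Complex.exp (t * Complex.I) with hz_def
  have hzabs : ‖z‖ = r := by
    rw [hz_def, norm_mul, Complex.norm_exp]
    simp [_root_.abs_of_nonneg hr0]
  have hzball : z ∈ ball (0:ℂ) 1 := by
    rw [mem_ball_zero_iff, hzabs]; exact hr1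
  have hschwarz : ‖φ z‖ ≤ ‖z‖ :=
    Complex.norm_le_norm_of_mapsTo_ball hφdiff (hmaps.mono_right ball_subset_closedBall) hφ0 (by rw [hzabs]; exact hr1)
  rw [hzabs] at hschwarz
  set w : ℂ := φ z with hw_def
  set p : ℝ := w.re with hp_def
  set q : ℝ := w.im with hq_def
  have hpq : p^2 + q^2 ≤ r^2 := by
    have h1 : ‖w‖^2 ≤ r^2 := by
      apply pow_le_pow_left₀ (norm_nonneg _) hschwarz
    rw [Complex.sq_norm, Complex.normSq_apply] at h1
    nlinarith
  have hpr : |p| ≤ r := le_trans (Complex.abs_re_le_norm w) hschwarz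
  have hprl : -r ≤ p := neg_le_of_abs_le hpr
  have hpru : p ≤ r := le_of_abs_le hpr
  have hweq : f z * (1 - w) = (a:ℂ) * (1 + w) := by
    have h := hw_def
    rw [hφ] at h
    field_simp [hden z hzball] at h
    linear_combination -h
  have h1 := congrArg Complex.re hweq
  have h2 := congrArg Complex.im hweq
  simp only [Complex.mul_re, Complex.mul_im, Complex.sub_re, Complex.sub_im, Complex.add_re,
    Complex.add_im, Complex.one_re, Complex.one_im, Complex.ofReal_re, Complex.ofReal_im,
    hfre z hzball, ← hp_def, ← hq_def, zero_sub, zero_add, zero_mul, mul_zero, sub_zero] at h1 h2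
  have key : v z * ((1 - p)^2 + q^2) = a * (1 - (p^2 + q^2)) := by
    linear_combination (1 - p) * h1 - q * h2
  have hD : (0:ℝ) < (1 - p)^2 + q^2 := by nlinarith
  have hX1 : (1-r)*((1-p)^2+q^2) ≤ (1+r)*(1-(p^2+q^2)) := by
    nlinarith [mul_nonneg (by linarith : (0:ℝ) ≤ 1 - r) (by linarith : (0:ℝ) ≤ p + r)]
  have hX2 : (1-r)*(1-(p^2+q^2)) ≤ (1+r)*((1-p)^2+q^2) := by
    nlinarith [sq_nonneg q, mul_nonneg (by linarith : (0:ℝ) ≤ 1-p) (by linarith : (0:ℝ) ≤ r-p)]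
  clear_value a z p q w
  constructor
  · rw [div_mul_eq_mul_div, div_le_iff₀ (by linarith : (0:ℝ) < 1 + r)]
    have hm := mul_le_mul_of_nonneg_left hX1 ha.le
    apply le_of_mul_le_mul_right _ hD
    nlinarith [key, hm]
  · rw [mul_comm, ← mul_div_assoc, le_div_iff₀ (by linarith : (0:ℝ) < 1 - r)]
    have hm := mul_le_mul_of_nonneg_left hX2 ha.le
    apply le_of_mul_le_mul_right _ hD
    nlinarith [key, hm]
end

section
/- If u is a C² minimal plurisubharmonic function on a domain Ω ⊂ ℝⁿ and f : D → Ω is a conformal harmonic map from the unit disc, then u ∘ f is subharmonic on D. -/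
open Metric RealInnerProductSpace

/-- The (vector-valued) Laplacian of a map `f : ℂ → ℝⁿ`. -/
noncomputable def lapV (n : ℕ) (f : ℂ → EuclideanSpace ℝ (Fin n)) (z : ℂ) :
    EuclideanSpace ℝ (Fin n) :=
  fderiv ℝ (fun w => fderiv ℝ f w 1) z 1 +
  fderiv ℝ (fun w => fderiv ℝ f w Complex.I) z Complex.I

/-- A map `f : ℂ → ℝⁿ` is conformal harmonic on a set `s` if it is `C²`, harmonic, and
`|f_x| = |f_y|`, `f_x · f_y = 0` at every point of `s`. -/
def ConformalHarmonicOn (n : ℕ) (f : ℂ → EuclideanSpace ℝ (Fin n)) (s : Set ℂ) : Prop :=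
  ContDiffOn ℝ 2 f s ∧ (∀ z ∈ s, lapV n f z = 0) ∧
  ∀ z ∈ s, ‖fderiv ℝ f z 1‖ = ‖fderiv ℝ f z Complex.I‖ ∧
    ⟪fderiv ℝ f z 1, fderiv ℝ f z Complex.I⟫ = 0

/-- The Hessian bilinear form of `u : ℝⁿ → ℝ` at `x`, applied to vectors `v, w`. -/
noncomputable def hess (n : ℕ) (u : EuclideanSpace ℝ (Fin n) → ℝ)
    (x v w : EuclideanSpace ℝ (Fin n)) : ℝ :=
  fderiv ℝ (fun y => fderiv ℝ u y v) x w

/-- A `C²` function is minimal plurisubharmonic on `s` if the trace of the restriction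
of its Hessian to every 2-plane is nonnegative at each point of `s`. -/
def MPSHOn (n : ℕ) (u : EuclideanSpace ℝ (Fin n) → ℝ)
    (s : Set (EuclideanSpace ℝ (Fin n))) : Prop :=
  ∀ x ∈ s, ∀ v w : EuclideanSpace ℝ (Fin n), ‖v‖ = 1 → ‖w‖ = 1 → ⟪v, w⟫ = 0 →
    0 ≤ hess n u x v v + hess n u x w w

section Aux

variable {n : ℕ}

/-- The Hessian as the second `fderiv`, assuming differentiability of `fderiv u`. -/
lemma hess_eq (u : EuclideanSpace ℝ (Fin n) → ℝ) (x : EuclideanSpace ℝ (Fin n))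
    (hu : DifferentiableAt ℝ (fderiv ℝ u) x) (v w : EuclideanSpace ℝ (Fin n)) :
    hess n u x v w = fderiv ℝ (fderiv ℝ u) x w v := by
  unfold hess
  have h := fderiv_clm_apply (c := fderiv ℝ u) (u := fun _ => v) hu (differentiableAt_const v)
  rw [h]
  simp

/-- Second derivative chain rule in a single direction `v`. -/
lemma dd_comp {u : EuclideanSpace ℝ (Fin n) → ℝ} {f : ℂ → EuclideanSpace ℝ (Fin n)} {z : ℂ}
    (v : ℂ) (hf2 : ContDiffAt ℝ 2 f z) (hu2 : ∀ᶠ w in nhds z, ContDiffAt ℝ 2 u (f w)) :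
    fderiv ℝ (fun w => fderiv ℝ (u ∘ f) w v) z v =
      hess n u (f z) (fderiv ℝ f z v) (fderiv ℝ f z v) +
      fderiv ℝ u (f z) (fderiv ℝ (fun w => fderiv ℝ f w v) z v) := by
  have hEq : (fun w => fderiv ℝ (u ∘ f) w v) =ᶠ[nhds z]
      (fun w => fderiv ℝ u (f w) (fderiv ℝ f w v)) := by
    filter_upwards [hf2.eventually (by norm_num), hu2] with w hfw huw
    have h1 : DifferentiableAt ℝ f w := hfw.differentiableAt two_ne_zero
    have h2 : DifferentiableAt ℝ u (f w) := huw.differentiableAt two_ne_zero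
    rw [fderiv_comp w h2 h1]; rfl
  rw [hEq.fderiv_eq]
  have hdf : DifferentiableAt ℝ f z := hf2.differentiableAt two_ne_zero
  have hdfd : DifferentiableAt ℝ (fderiv ℝ f) z :=
    (hf2.fderiv_right (m := 1) le_rfl).differentiableAt one_ne_zero
  have hu2z : ContDiffAt ℝ 2 u (f z) := hu2.self_of_nhds
  have hdu : DifferentiableAt ℝ (fderiv ℝ u) (f z) :=
    (hu2z.fderiv_right (m := 1) le_rfl).differentiableAt one_ne_zero
  have hc : DifferentiableAt ℝ (fun w => fderiv ℝ u (f w)) z := hdu.comp z hdf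
  have hg : DifferentiableAt ℝ (fun w => fderiv ℝ f w v) z :=
    hdfd.clm_apply (differentiableAt_const v)
  rw [fderiv_clm_apply hc hg]
  have hcz : fderiv ℝ (fun w => fderiv ℝ u (f w)) z =
      (fderiv ℝ (fderiv ℝ u) (f z)).comp (fderiv ℝ f z) :=
    fderiv_comp z hdu hdf
  rw [hess_eq u (f z) hdu]
  simp only [ContinuousLinearMap.add_apply, ContinuousLinearMap.coe_comp', Function.comp_apply,
    ContinuousLinearMap.flip_apply, hcz]
  ring

/-- Chain rule for the Laplacian of a composition. -/
lemma lap_comp {u : EuclideanSpace ℝ (Fin n) → ℝ} {f : ℂ → EuclideanSpace ℝ (Fin n)} {z : ℂ}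
    (hf2 : ContDiffAt ℝ 2 f z) (hu2 : ∀ᶠ w in nhds z, ContDiffAt ℝ 2 u (f w)) :
    lap (u ∘ f) z =
      hess n u (f z) (fderiv ℝ f z 1) (fderiv ℝ f z 1) +
      hess n u (f z) (fderiv ℝ f z Complex.I) (fderiv ℝ f z Complex.I) +
      fderiv ℝ u (f z) (lapV n f z) := by
  unfold lap lapV
  rw [dd_comp 1 hf2 hu2, dd_comp Complex.I hf2 hu2, map_add]
  ring

end Aux

/-- If `u` is a `C²` MPSH function on a domain `Ω ⊆ ℝⁿ` and `f : D → Ω` is a conformal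
harmonic map from the unit disc, then `u ∘ f` is subharmonic on `D`
(for `C²` functions: `Δ(u∘f) ≥ 0`). -/
theorem stmt5 (n : ℕ) (hn : 3 ≤ n) (Ω : Set (EuclideanSpace ℝ (Fin n)))
    (hΩ : IsOpen Ω) (u : EuclideanSpace ℝ (Fin n) → ℝ)
    (hu : ContDiffOn ℝ 2 u Ω) (hmpsh : MPSHOn n u Ω)
    (f : ℂ → EuclideanSpace ℝ (Fin n))
    (hf : ConformalHarmonicOn n f (ball (0:ℂ) 1))
    (hfΩ : Set.MapsTo f (ball (0:ℂ) 1) Ω) :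
    ∀ z ∈ ball (0:ℂ) 1, 0 ≤ lap (u ∘ f) z := by
  intro z hz
  obtain ⟨hfC2, hharm, hconf⟩ := hf
  have hf2 : ContDiffAt ℝ 2 f z := hfC2.contDiffAt (isOpen_ball.mem_nhds hz)
  have hfzΩ : f z ∈ Ω := hfΩ hz
  have hu2 : ∀ᶠ w in nhds z, ContDiffAt ℝ 2 u (f w) := by
    have hcont : ContinuousAt f z := hf2.continuousAt
    filter_upwards [hcont.preimage_mem_nhds (hΩ.mem_nhds hfzΩ)] with w hw
    exact hu.contDiffAt (hΩ.mem_nhds hw)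
  rw [lap_comp hf2 hu2, hharm z hz, map_zero, add_zero]
  set a := fderiv ℝ f z 1 with ha
  set b := fderiv ℝ f z Complex.I with hb
  obtain ⟨hnorm, hinner⟩ := hconf z hz
  have hdu : DifferentiableAt ℝ (fderiv ℝ u) (f z) :=
    ((hu.contDiffAt (hΩ.mem_nhds hfzΩ)).fderiv_right (m := 1) le_rfl).differentiableAt one_ne_zero
  by_cases hc : ‖a‖ = 0
  · have haz : a = 0 := norm_eq_zero.mp hc
    have hbz : b = 0 := norm_eq_zero.mp (by rw [← hnorm]; exact hc)
    rw [haz, hbz, hess_eq u (f z) hdu]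
    simp
  · have hcpos : 0 < ‖a‖ := lt_of_le_of_ne (norm_nonneg a) (Ne.symm hc)
    set c := ‖a‖ with hcdef
    set v := c⁻¹ • a with hv
    set w := c⁻¹ • b with hw
    have hvn : ‖v‖ = 1 := by
      rw [hv, norm_smul, norm_inv, Real.norm_eq_abs, abs_of_pos hcpos]
      field_simp
      exact hcdef.symm
    have hwn : ‖w‖ = 1 := by
      rw [hw, norm_smul, norm_inv, Real.norm_eq_abs, abs_of_pos hcpos, ← hnorm]
      field_simp
    have hvw : ⟪v, w⟫ = 0 := by
      rw [hv, hw, real_inner_smul_left, real_inner_smul_right, hinner]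
      ring
    have hkey := hmpsh (f z) hfzΩ v w hvn hwn hvw
    have hav : a = c • v := by
      rw [hv, smul_smul, mul_inv_cancel₀ hc, one_smul]
    have hbw : b = c • w := by
      rw [hw, smul_smul, mul_inv_cancel₀ hc, one_smul]
    have h1 : hess n u (f z) a a = c * c * hess n u (f z) v v := by
      rw [hess_eq u (f z) hdu, hess_eq u (f z) hdu, hav]
      simp only [map_smul, ContinuousLinearMap.smul_apply, smul_eq_mul]
      ring
    have h2 : hess n u (f z) b b = c * c * hess n u (f z) w w := by
      rw [hess_eq u (f z) hdu, hess_eq u (f z) hdu, hbw]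
      simp only [map_smul, ContinuousLinearMap.smul_apply, smul_eq_mul]
      ring
    rw [h1, h2, ← mul_add]
    exact mul_nonneg (mul_nonneg hcpos.le hcpos.le) hkey
end

section
/- Let (v, w) ∈ ℝⁿ × ℝⁿ be an orthonormal conformal frame, i.e., |v| = |w| = 1 and v · w = 0. Write v = (v', v_n) and w = (w', w_n) with v', w' ∈ ℝⁿ⁻¹. Then |v_n| ≤ |w'|. -/
open RealInnerProductSpace

/-- Let `(v, w)` be an orthonormal conformal frame in `ℝⁿ` (here `n = m + 1`, with the
last coordinate singled out): `|v| = |w| = 1` and `v · w = 0`. Writing `v = (v', vₙ)`,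
`w = (w', wₙ)`, we have `|vₙ| ≤ |w'|`. -/
theorem stmt11 (m : ℕ) (v w : EuclideanSpace ℝ (Fin (m + 1)))
    (hv : ‖v‖ = 1) (hw : ‖w‖ = 1) (hvw : ⟪v, w⟫ = 0) :
    |v (Fin.last m)| ≤ Real.sqrt (∑ i : Fin m, w (Fin.castSucc i) ^ 2) := by
  have hv2 : ∑ i : Fin (m+1), v i ^ 2 = 1 := by
    have := congrArg (· ^ 2) hv
    rw [EuclideanSpace.norm_eq] at this
    simpa [Real.sq_sqrt (Finset.sum_nonneg fun i _ => sq_nonneg (v i)),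
      sq_abs] using this
  have hw2 : ∑ i : Fin (m+1), w i ^ 2 = 1 := by
    have := congrArg (· ^ 2) hw
    rw [EuclideanSpace.norm_eq] at this
    simpa [Real.sq_sqrt (Finset.sum_nonneg fun i _ => sq_nonneg (w i)),
      sq_abs] using this
  have hi : ∑ i : Fin (m+1), v i * w i = 0 := by
    simpa [PiLp.inner_apply, mul_comm] using hvw
  rw [Fin.sum_univ_castSucc] at hv2 hw2 hi
  set A := v (Fin.last m)
  set B := w (Fin.last m)
  set P := ∑ i : Fin m, v (Fin.castSucc i) ^ 2
  set Q := ∑ i : Fin m, w (Fin.castSucc i) ^ 2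
  have hPQ : (∑ i : Fin m, v (Fin.castSucc i) * w (Fin.castSucc i)) ^ 2 ≤ P * Q := by
    simpa [P, Q] using Finset.sum_mul_sq_le_sq_mul_sq Finset.univ
      (fun i => v (Fin.castSucc i)) (fun i => w (Fin.castSucc i))
  have hs : ∑ i : Fin m, v (Fin.castSucc i) * w (Fin.castSucc i) = -(A*B) := by linarith
  rw [hs, neg_sq] at hPQ
  have hA2 : A ^ 2 ≤ Q := by
    have hP : 0 ≤ P := Finset.sum_nonneg fun i _ => sq_nonneg _
    have hQ : 0 ≤ Q := Finset.sum_nonneg fun i _ => sq_nonneg _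
    nlinarith [hPQ, sq_nonneg (A*B), sq_nonneg A, sq_nonneg B]
  calc |A| = Real.sqrt (A ^ 2) := by rw [Real.sqrt_sq_eq_abs]
    _ ≤ Real.sqrt Q := Real.sqrt_le_sqrt hA2
end
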